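/- Key claim in the pcf construction: under the hypotheses that ⟨f_α : α < λ⟩ is <_D-increasing and cofinal in ∏_{i<δ} λ_i / D where D is a σ-complete filter on δ containing co-bounded sets, λ = cf(λ) > |δ|, and given pairwise distinct indices γ(ε,α) < λ for ε < ε(*) < σ and α < λ, setting g_α(i) = min{f_{γ(ε,α)}(i) : ε < ε(*)}, the set B = {i < δ : for every ξ < λ_i there are λ many α < λ with g_α(i) > ξ} belongs to D. -/

import Mathlib

open Cardinal

universe u

/-- Claim 3.1A: with `⟨f_α : α < λ⟩` `<_D`-increasing and cofinal in
    `∏ λ_i / D` for a σ-complete filter `D` containing the co-bounded sets,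
    `λ` regular `> |δ|`, and indices `γ(ε,α) < λ` pairwise distinct in `α`
    for each fixed `ε < ε(*) < σ`, the set
    `B = {i < δ : (∀ ξ < λ_i)(∃^λ α)(g_α(i) > ξ)}` (where
    `g_α(i) = min_ε f_{γ(ε,α)}(i)`, i.e. `g_α(i) > ξ ↔ ∀ ε, f_{γ(ε,α)}(i) > ξ`)
    belongs to `D`. -/
theorem stmt_7 (δ : Ordinal.{u}) (lam σ : Cardinal.{u})
    (hδ : Order.IsSuccLimit δ)
    (lam_ : δ.ToType → Cardinal.{u})
    (hinc : StrictMono lam_)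
    (hregi : ∀ i, (lam_ i).IsRegular)
    (hbetween : ∀ i, #δ.ToType < lam_ i ∧ lam_ i < lam)
    (hlamreg : lam.IsRegular)
    (D : Filter δ.ToType) (hne : D.NeBot)
    (hDcomplete : ∀ S : Set (Set δ.ToType), #S < σ → (∀ A ∈ S, A ∈ D) → ⋂₀ S ∈ D)
    (hDcobounded : ∀ i : δ.ToType, {j | i < j} ∈ D)
    (f : lam.ord.ToType → ∀ i : δ.ToType, (lam_ i).ord.ToType)
    (hfinc : ∀ α β, α < β → {i | f α i < f β i} ∈ D)
    (hfcof : ∀ g : ∀ i : δ.ToType, (lam_ i).ord.ToType, ∃ α, {i | g i < f α i} ∈ D)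
    (E : Type u) (hE : #E < σ)
    (γ : E → lam.ord.ToType → lam.ord.ToType)
    (hγ : ∀ ε, Function.Injective (γ ε)) :
    {i : δ.ToType | ∀ ξ : (lam_ i).ord.ToType,
      lam ≤ #{α : lam.ord.ToType | ∀ ε : E, ξ < f (γ ε α) i}} ∈ D := by
  classical
  have hI : Nonempty δ.ToType := Ordinal.nonempty_toType_iff.2 hδ.pos.ne'
  obtain ⟨i0⟩ := hI
  -- If σ is bigger than #δ.ToType, the hypotheses are contradictory.
  have habs : #δ.ToType < σ → False := by
    intro hσ
    have hmem : (⋂₀ Set.range fun i : δ.ToType => {j | i < j}) ∈ D :=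
      hDcomplete _ (Cardinal.mk_range_le.trans_lt hσ)
        (by rintro A ⟨i, rfl⟩; exact hDcobounded i)
    have hempty : (⋂₀ Set.range fun i : δ.ToType => {j | i < j}) = (∅ : Set δ.ToType) := by
      ext j
      simp only [Set.sInter_range, Set.mem_iInter, Set.mem_setOf_eq, Set.mem_empty_iff_false,
        iff_false, not_forall]
      exact ⟨j, lt_irrefl j⟩
    rw [hempty] at hmem
    exact (Filter.empty_notMem D) hmem
  have hElam : #E < lam := by
    by_contra h
    exact habs (((hbetween i0).1.trans (hbetween i0).2).trans_le ((le_of_not_gt h).trans hE.le))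
  have hKne : ∀ i, Nonempty ((lam_ i).ord.ToType) := fun i =>
    Ordinal.nonempty_toType_iff.2
      (by simp only [ne_eq, Cardinal.ord_eq_zero]
          exact ((hregi i).pos).ne')
  -- the "bad" predicate
  by_contra hB
  -- positivity of the complement
  have hpos : ∀ C ∈ D, ∃ i ∈ C,
      ∃ ξ : (lam_ i).ord.ToType, #{α : lam.ord.ToType | ∀ ε : E, ξ < f (γ ε α) i} < lam := by
    intro C hC
    by_contra h
    push_neg at h
    exact hB (D.sets_of_superset hC fun i hi ξ => h i hi ξ)
  -- choose potential witnesses ξ i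
  have hξex : ∀ i : δ.ToType, ∃ ξ : (lam_ i).ord.ToType,
      (∃ ξ' : (lam_ i).ord.ToType, #{α : lam.ord.ToType | ∀ ε : E, ξ' < f (γ ε α) i} < lam) →
      #{α : lam.ord.ToType | ∀ ε : E, ξ < f (γ ε α) i} < lam := by
    intro i
    by_cases h : ∃ ξ' : (lam_ i).ord.ToType,
        #{α : lam.ord.ToType | ∀ ε : E, ξ' < f (γ ε α) i} < lam
    · obtain ⟨ξ', hξ'⟩ := h
      exact ⟨ξ', fun _ => hξ'⟩
    · exact ⟨Classical.arbitrary _, fun h' => absurd h' h⟩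
  choose ξ hξ using hξex
  obtain ⟨β, hβ⟩ := hfcof ξ
  -- the large set G of α with all γ ε α ≥ β
  set G : Set lam.ord.ToType := {α | ∀ ε : E, β ≤ γ ε α} with hGdef
  have hGc : #(Gᶜ : Set lam.ord.ToType) < lam := by
    have hsub : (Gᶜ : Set lam.ord.ToType) ⊆ ⋃ ε : E, (γ ε) ⁻¹' (Set.Iio β) := by
      intro α hα
      simp only [hGdef, Set.mem_compl_iff, Set.mem_setOf_eq, not_forall, not_le] at hα
      obtain ⟨ε, hε⟩ := hα
      exact Set.mem_iUnion.2 ⟨ε, hε⟩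
    refine (Cardinal.mk_le_mk_of_subset hsub).trans_lt ?_
    refine Cardinal.mk_iUnion_le_sum_mk.trans_lt ?_
    refine Cardinal.sum_lt_of_isRegular hlamreg hElam fun ε => ?_
    exact (Cardinal.mk_preimage_of_injective _ _ (hγ ε)).trans_lt
      (Cardinal.mk_Iio_ord_toType β)
  have hGbig : lam ≤ #(G : Set lam.ord.ToType) := by
    by_contra h
    push_neg at h
    have := Cardinal.mk_sum_compl G
    rw [Cardinal.mk_toType, Cardinal.card_ord] at this
    exact absurd this.ge (not_le.2 (Cardinal.add_lt_of_lt hlamreg.aleph0_le h hGc))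
  -- for α ∈ G, the set C_α is in D
  have hCα : ∀ α ∈ G, {i : δ.ToType | ∀ ε : E, ξ i < f (γ ε α) i} ∈ D := by
    intro α hα
    have heq : {i : δ.ToType | ∀ ε : E, ξ i < f (γ ε α) i} =
        ⋂₀ Set.range fun ε : E => {i | ξ i < f (γ ε α) i} := by
      ext i
      simp [Set.sInter_range]
    rw [heq]
    refine hDcomplete _ (Cardinal.mk_range_le.trans_lt hE) ?_
    rintro A ⟨ε, rfl⟩
    dsimp only
    rcases eq_or_lt_of_le (hα ε) with hle | hlt
    · rw [← hle]; exact hβ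
    · exact D.sets_of_superset (D.inter_sets hβ (hfinc β _ hlt))
        fun i hi => show ξ i < f (γ ε α) i from lt_trans hi.1 hi.2
  -- choose for each α ∈ G a bad index i(α) inside C_α
  have hw : ∀ α : G, ∃ i : δ.ToType,
      #{α' : lam.ord.ToType | ∀ ε : E, ξ i < f (γ ε α') i} < lam ∧
      (∀ ε : E, ξ i < f (γ ε α.1) i) := by
    rintro ⟨α, hα⟩
    obtain ⟨i, hiC, hibad⟩ := hpos _ (hCα α hα)
    exact ⟨i, hξ i hibad, hiC⟩
  choose w hw1 hw2 using hw
  -- pigeonhole: some fiber of w has size ≥ lam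
  have hfib : ∃ i : δ.ToType, lam ≤ #{α : G | w α = i} := by
    by_contra h
    push_neg at h
    have hcover : (⋃ i : δ.ToType, {α : G | w α = i}) = Set.univ := by
      ext α
      simp only [Set.mem_iUnion, Set.mem_setOf_eq, Set.mem_univ, iff_true]
      exact ⟨w α, rfl⟩
    have hlt : #(⋃ i : δ.ToType, {α : G | w α = i}) < lam :=
      Cardinal.mk_iUnion_le_sum_mk.trans_lt
        (Cardinal.sum_lt_of_isRegular hlamreg
          (((hbetween i0).1.trans (hbetween i0).2)) h)
    rw [hcover, Cardinal.mk_univ] at hlt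
    exact absurd hGbig (not_le.2 hlt)
  obtain ⟨i, hi⟩ := hfib
  -- the fiber is nonempty, giving i ∈ "bad" with its witness
  have hfne : Nonempty {α : G | w α = i} := by
    rw [← Cardinal.mk_ne_zero_iff]
    intro h0
    rw [h0] at hi
    exact (Cardinal.aleph0_pos.trans_le (hlamreg.aleph0_le.trans hi)).false
  obtain ⟨⟨α0, hα0⟩⟩ := hfne
  have hbad : #{α' : lam.ord.ToType | ∀ ε : E, ξ i < f (γ ε α') i} < lam := by
    have := hw1 α0
    rwa [hα0] at this
  -- but the fiber injects into that set
  have hinj : lam ≤ #{α' : lam.ord.ToType | ∀ ε : E, ξ i < f (γ ε α') i} := by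
    refine hi.trans (Cardinal.mk_le_of_injective (f := fun α : {α : G | w α = i} =>
      (⟨α.1.1, by
        have h2 := hw2 α.1
        rw [α.2] at h2
        exact h2⟩ : {α' : lam.ord.ToType | ∀ ε : E, ξ i < f (γ ε α') i})) ?_)
    rintro ⟨⟨a, ha⟩, ha'⟩ ⟨⟨b, hb⟩, hb'⟩ hab
    simp only [Subtype.mk.injEq] at hab
    exact Subtype.ext (Subtype.ext hab)
  exact absurd hinj (not_le.2 hbad)
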